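/- Let σ₁ be the half-turn twist about the z-axis with translational component (0,0,c), and σ₂, σ₃ half-turn twists with vertical axes through (p₂,0,0) and (p₃,q₃,0) respectively and the same translational component (0,0,c), where c ∈ ℤ, c > 0, p₂ > 0, q₃ > 0. Let 𝒟ℐ = ⟨σ₁,σ₂,σ₃⟩. Then the covolume of 𝒟ℐ (number of unit cubes in a fundamental region) equals 4·c·q₃·p₂. -/

import Mathlib

noncomputable section
open scoped RealInnerProductSpace

abbrev E3 : Type := EuclideanSpace ℝ (Fin 3)

def vec (x y z : ℝ) : E3 := (WithLp.equiv 2 (Fin 3 → ℝ)).symm ![x, y, z]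

/-- The vertex set of the cubic tessellation: the integer lattice ℤ³. -/
def latt : Set E3 := {p | ∀ i, ∃ n : ℤ, p i = (n : ℝ)}

/-- An isometry belongs to the symmetry group [4,3,4] of the cubic tessellation
iff it preserves the integer lattice. -/
def PreservesLatt (f : E3 ≃ᵢ E3) : Prop := ∀ p : E3, p ∈ latt ↔ f p ∈ latt

/-- `f` is a rotation of order `n` about the line through `p` with direction `v`:
it fixes the line pointwise and has order `n` in the isometry group. -/
def IsRotationAbout (f : E3 ≃ᵢ E3) (p v : E3) (n : ℕ) : Prop :=
  v ≠ 0 ∧ (∀ t : ℝ, f (p + t • v) = p + t • v) ∧ orderOf f = n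

/-- `f` is a twist (screw motion): the commuting product of a rotation `r` of order `n ≥ 2`
about the line through `p` in direction `v` with the translation by `w ≠ 0`, `w` parallel to `v`. -/
def IsTwist (f : E3 ≃ᵢ E3) (p v w : E3) (n : ℕ) : Prop :=
  2 ≤ n ∧ w ≠ 0 ∧ (∃ s : ℝ, w = s • v) ∧
  ∃ r : E3 ≃ᵢ E3, IsRotationAbout r p v n ∧ (∀ x, f x = r x + w) ∧ (∀ x, r (x + w) = r x + w)

/-- The 4-fold twist about the vertical line through `(p,q,0)` with translational
component `(0,0,c)`: rotation by π/2 about the line composed with translation by `(0,0,c)`. -/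
def fourTwist (p q c : ℝ) : E3 → E3 :=
  fun x => vec (p + (x 1 - q)) (q - (x 0 - p)) (x 2 + c)

/-- The half-turn twist about the vertical line through `(p,q,0)` with translational
component `(0,0,c)`. -/
def halfTwistV (p q c : ℝ) : E3 → E3 :=
  fun x => vec (2 * p - x 0) (2 * q - x 1) (x 2 + c)

instance : MulAction (E3 ≃ᵢ E3) E3 where
  smul f x := f x
  one_smul _ := rfl
  mul_smul _ _ _ := rfl

namespace DicosmAux
open MeasureTheory

@[simp] lemma vec_zero (a b c : ℝ) : vec a b c 0 = a := rfl
@[simp] lemma vec_one (a b c : ℝ) : vec a b c 1 = b := rfl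
@[simp] lemma vec_two (a b c : ℝ) : vec a b c 2 = c := rfl
@[simp] lemma add_apply' (x y : E3) (i : Fin 3) : (x + y) i = x i + y i := rfl
@[simp] lemma smul_apply' (m : ℝ) (y : E3) (i : Fin 3) : (m • y) i = m * y i := rfl

lemma e3_ext (x : E3) : vec (x 0) (x 1) (x 2) = x := by ext i; fin_cases i <;> rfl

lemma vec_congr {a b c a' b' c' : ℝ} (h1 : a = a') (h2 : b = b') (h3 : c = c') :
    vec a b c = vec a' b' c' := by rw [h1, h2, h3]

lemma e3_eq {u v : E3} (h0 : u 0 = v 0) (h1 : u 1 = v 1) (h2 : u 2 = v 2) : u = v :=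
  PiLp.ext fun i => by fin_cases i <;> assumption

/-- Any isometry of E3 is measure preserving. -/
lemma isom_measurePreserving (f : E3 ≃ᵢ E3) : MeasurePreserving f := by
  have h : ⇑f = (fun y => y + f 0) ∘ ⇑f.toRealLinearIsometryEquiv := by funext x; simp
  rw [h]
  exact (measurePreserving_add_right volume (f 0)).comp
    f.toRealLinearIsometryEquiv.measurePreserving

/-- Powers of a translation. -/
lemma zpow_translation {t : E3 ≃ᵢ E3} {v : E3} (ht : ∀ x, t x = x + v) :
    ∀ (n : ℤ) (x : E3), (t ^ n) x = x + (n : ℝ) • v := by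
  have hinv : ∀ x, (t⁻¹) x = x - v := by
    intro x
    apply t.injective
    rw [IsometryEquiv.apply_inv_self, ht, sub_add_cancel]
  intro n
  induction n using Int.induction_on with
  | zero => intro x; simp
  | succ k ih =>
      intro x
      rw [zpow_add_one, IsometryEquiv.mul_apply, ht, ih]
      push_cast
      module
  | pred k ih =>
      intro x
      rw [zpow_sub_one, IsometryEquiv.mul_apply, hinv, ih]
      push_cast
      module

/-- The closure of a countable set in a group is countable. -/
lemma countable_closure {G : Type*} [Group G] {S : Set G} (hS : S.Countable) :
    Countable (Subgroup.closure S) := by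
  haveI : Countable ↥(S ∪ S⁻¹) := by
    refine Set.Countable.to_subtype (hS.union ?_)
    have : (S⁻¹ : Set G) = Inv.inv ⁻¹' S := Set.inv_preimage.symm
    rw [this]; exact hS.preimage inv_injective
  have key : (Subgroup.closure S : Set G) ⊆
      Set.range (fun l : List ↥(S ∪ S⁻¹) => (l.map Subtype.val).prod) := by
    intro x hx
    have hx' : x ∈ Submonoid.closure (S ∪ S⁻¹) := by
      rw [← Subgroup.closure_toSubmonoid]
      exact hx
    obtain ⟨l, hl, rfl⟩ := Submonoid.exists_list_of_mem_closure hx'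
    refine ⟨l.pmap (fun y hy => (⟨y, hy⟩ : ↥(S ∪ S⁻¹))) hl, ?_⟩
    simp [List.map_pmap, List.pmap_eq_map]
  exact ((Set.countable_range _).mono key).to_subtype

/-- The normal form of elements of the dicosm group. -/
def Good (p2 p3 q3 cr : ℝ) (g : E3 ≃ᵢ E3) : Prop :=
  ∃ (e : Bool) (a b k : ℤ), ∀ x : E3,
    g x = vec ((if e then -x 0 else x 0) + (2 * a * p2 + 2 * b * p3))
              ((if e then -x 1 else x 1) + 2 * b * q3)
              (x 2 + (2 * k + (if e then 1 else 0)) * cr)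

variable {p2 p3 q3 cr : ℝ}

lemma good_one : Good p2 p3 q3 cr 1 := by
  refine ⟨false, 0, 0, 0, fun x => ?_⟩
  apply e3_eq <;> simp

lemma good_mul {g h : E3 ≃ᵢ E3} (hg : Good p2 p3 q3 cr g) (hh : Good p2 p3 q3 cr h) :
    Good p2 p3 q3 cr (g * h) := by
  obtain ⟨e1, a1, b1, k1, H1⟩ := hg
  obtain ⟨e2, a2, b2, k2, H2⟩ := hh
  refine ⟨xor e1 e2, a1 + (if e1 then -a2 else a2), b1 + (if e1 then -b2 else b2),
    k1 + k2 + (if e1 && e2 then 1 else 0), fun x => ?_⟩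
  rw [IsometryEquiv.mul_apply, H2, H1]
  apply vec_congr <;> rcases e1 <;> rcases e2 <;> simp <;> push_cast <;> ring

lemma good_inv {g : E3 ≃ᵢ E3} (hg : Good p2 p3 q3 cr g) : Good p2 p3 q3 cr g⁻¹ := by
  obtain ⟨e, a, b, k, H⟩ := hg
  refine ⟨e, if e then a else -a, if e then b else -b, -k - (if e then 1 else 0), fun x => ?_⟩
  set V : E3 := vec ((if e then -x 0 else x 0) + (2 * (if e then a else -a : ℤ) * p2 + 2 * (if e then b else -b : ℤ) * p3))
              ((if e then -x 1 else x 1) + 2 * (if e then b else -b : ℤ) * q3)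
              (x 2 + (2 * (-k - (if e then 1 else 0) : ℤ) + (if e then 1 else 0)) * cr) with hV
  have key : g V = x := by
    rw [H, ← e3_ext x]
    apply vec_congr <;> rcases e <;> simp [hV] <;> push_cast <;> ring
  calc g⁻¹ x = g⁻¹ (g V) := by rw [key]
  _ = V := IsometryEquiv.inv_apply_self g V

lemma good_gen {g : E3 ≃ᵢ E3} {p q : ℝ} (a b : ℤ) (hp : p = a * p2 + b * p3) (hq : q = b * q3)
    (h : ∀ x, g x = halfTwistV p q cr x) : Good p2 p3 q3 cr g := by
  subst hp
  subst hq
  refine ⟨true, a, b, 0, fun x => ?_⟩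
  rw [h]
  unfold halfTwistV
  apply vec_congr <;> simp <;> push_cast <;> ring

/-- floor trick -/
lemma floor_trick {d : ℝ} (hd : 0 < d) (t : ℝ) :
    0 ≤ t - ⌊t / d⌋ * d ∧ t - ⌊t / d⌋ * d < d := by
  constructor
  · have h := Int.floor_le (t / d)
    have h' := (le_div_iff₀ hd).1 h
    linarith
  · have h := Int.lt_floor_add_one (t / d)
    have h' := (div_lt_iff₀ hd).1 h
    linarith

/-- The shear linear map. -/
def shear (r : ℝ) : (Fin 3 → ℝ) →ₗ[ℝ] (Fin 3 → ℝ) where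
  toFun y := ![y 0 - r * y 1, y 1, y 2]
  map_add' a b := by funext i; fin_cases i <;> simp <;> ring
  map_smul' m a := by funext i; fin_cases i <;> simp <;> ring

@[simp] lemma shear_apply (r : ℝ) (y : Fin 3 → ℝ) :
    shear r y = ![y 0 - r * y 1, y 1, y 2] := rfl

lemma det_shear (r : ℝ) : LinearMap.det (shear r) = 1 := by
  have hM : LinearMap.toMatrix' (shear r) = !![1, -r, 0; 0, 1, 0; 0, 0, 1] := by
    ext i j
    rw [LinearMap.toMatrix'_apply]
    fin_cases i <;> fin_cases j <;> simp [shear, Matrix.vecHead, Matrix.vecTail]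
  rw [← LinearMap.det_toMatrix', hM, Matrix.det_fin_three]
  simp

/-- The fundamental domain -/
def Fset (cR p2 q3 r : ℝ) : Set E3 :=
  {x | (0 ≤ x 2 ∧ x 2 < cR) ∧ (0 ≤ x 1 ∧ x 1 < 2 * q3) ∧
    (0 ≤ x 0 - r * x 1 ∧ x 0 - r * x 1 < 2 * p2)}

def Bset (cR p2 q3 r : ℝ) : Set (Fin 3 → ℝ) :=
  {y | (0 ≤ y 2 ∧ y 2 < cR) ∧ (0 ≤ y 1 ∧ y 1 < 2 * q3) ∧
    (0 ≤ y 0 - r * y 1 ∧ y 0 - r * y 1 < 2 * p2)}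

lemma Bset_meas (cR p2 q3 r : ℝ) : MeasurableSet (Bset cR p2 q3 r) := by
  have : Bset cR p2 q3 r =
      ((fun y : Fin 3 → ℝ => y 2) ⁻¹' Set.Ico 0 cR) ∩
      (((fun y : Fin 3 → ℝ => y 1) ⁻¹' Set.Ico 0 (2 * q3)) ∩
      ((fun y : Fin 3 → ℝ => y 0 - r * y 1) ⁻¹' Set.Ico 0 (2 * p2))) := by
    ext y; simp [Bset, Set.mem_Ico, and_assoc]
  rw [this]
  exact ((measurable_pi_apply 2) measurableSet_Ico).inter
    (((measurable_pi_apply 1) measurableSet_Ico).inter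
      (((measurable_pi_apply (0 : Fin 3)).sub ((measurable_pi_apply 1 : Measurable fun y : Fin 3 → ℝ => y 1).const_mul r)) measurableSet_Ico))

lemma Fset_eq_preimage (cR p2 q3 r : ℝ) :
    Fset cR p2 q3 r = ((MeasurableEquiv.toLp 2 (Fin 3 → ℝ)).symm) ⁻¹' (Bset cR p2 q3 r) := rfl

lemma Fset_meas (cR p2 q3 r : ℝ) : MeasurableSet (Fset cR p2 q3 r) := by
  rw [Fset_eq_preimage]
  exact (MeasurableEquiv.toLp 2 (Fin 3 → ℝ)).symm.measurable (Bset_meas cR p2 q3 r)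

lemma Fset_volume {cR p2 q3 : ℝ} (r : ℝ) (hc : 0 < cR) (hp2 : 0 < p2) (hq3 : 0 < q3) :
    volume (Fset cR p2 q3 r) = ENNReal.ofReal (4 * cR * q3 * p2) := by
  have h1 : volume (Fset cR p2 q3 r) = volume (Bset cR p2 q3 r) := by
    rw [Fset_eq_preimage]
    exact (EuclideanSpace.volume_preserving_symm_measurableEquiv_toLp (Fin 3)).measure_preimage
      (Bset_meas cR p2 q3 r).nullMeasurableSet
  have hBeq : Bset cR p2 q3 r =
      (shear r) ⁻¹' (Set.univ.pi ![Set.Ico 0 (2 * p2), Set.Ico 0 (2 * q3), Set.Ico 0 cR]) := by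
    ext y
    simp only [Bset, Set.mem_preimage, Set.mem_pi, Set.mem_univ, forall_true_left,
      Set.mem_setOf_eq]
    constructor
    · rintro ⟨h2, h1, h0⟩ i
      fin_cases i
      · simpa [Set.mem_Ico] using h0
      · simpa [Set.mem_Ico] using h1
      · simpa [Set.mem_Ico] using h2
    · intro h
      refine ⟨?_, ?_, ?_⟩
      · simpa [Set.mem_Ico] using h 2
      · simpa [Set.mem_Ico] using h 1
      · simpa [Set.mem_Ico] using h 0
  rw [h1, hBeq, Measure.addHaar_preimage_linearMap volume (by rw [det_shear]; norm_num),
    det_shear, volume_pi_pi]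
  simp only [inv_one, abs_one, ENNReal.ofReal_one, one_mul]
  rw [Fin.prod_univ_three]
  simp only [Matrix.cons_val_zero, Matrix.cons_val_one, Matrix.head_cons, Matrix.cons_val_two,
    Matrix.tail_cons, Real.volume_Ico, sub_zero]
  rw [← ENNReal.ofReal_mul (by linarith), ← ENNReal.ofReal_mul (by positivity)]
  congr 1
  ring

end DicosmAux

open Pointwise in
open MeasureTheory in
/-- The covolume of the dicosm group 𝒟ℐ = ⟨σ₁,σ₂,σ₃⟩ (half-turn twists about the vertical
lines through `(0,0)`, `(p₂,0)`, `(p₃,q₃)`, each with translational component `(0,0,c)`),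
i.e. the number of unit cubes in a fundamental region, equals `4·c·q₃·p₂`. -/
theorem stmt19 (c : ℤ) (hc : 0 < c) (p2 p3 q3 : ℝ) (hp2 : 0 < p2) (hq3 : 0 < q3)
    (s1 s2 s3 : E3 ≃ᵢ E3)
    (h1 : ∀ x, s1 x = halfTwistV 0 0 (c : ℝ) x)
    (h2 : ∀ x, s2 x = halfTwistV p2 0 (c : ℝ) x)
    (h3 : ∀ x, s3 x = halfTwistV p3 q3 (c : ℝ) x)
    (s : Set E3)
    (hs : IsFundamentalDomain (Subgroup.closure ({s1, s2, s3} : Set (E3 ≃ᵢ E3))) s volume) :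
    volume s = ENNReal.ofReal (4 * (c : ℝ) * q3 * p2) := by
  classical
  have hcR : (0:ℝ) < (c:ℝ) := by exact_mod_cast hc
  have hq3' : (0:ℝ) < 2 * q3 := by linarith
  have hp2' : (0:ℝ) < 2 * p2 := by linarith
  set r : ℝ := p3 / q3 with hr
  have hrq : r * q3 = p3 := div_mul_cancel₀ _ (ne_of_gt hq3)
  set G := Subgroup.closure ({s1, s2, s3} : Set (E3 ≃ᵢ E3)) with hG
  -- every element of the group has a normal form
  have all_good : ∀ g ∈ G, DicosmAux.Good p2 p3 q3 (c:ℝ) g := by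
    intro g hg
    induction hg using Subgroup.closure_induction with
    | mem x hx =>
        simp only [Set.mem_insert_iff, Set.mem_singleton_iff] at hx
        rcases hx with rfl | rfl | rfl
        · exact DicosmAux.good_gen 0 0 (by push_cast; ring) (by push_cast; ring) h1
        · exact DicosmAux.good_gen 1 0 (by push_cast; ring) (by push_cast; ring) h2
        · exact DicosmAux.good_gen 0 1 (by push_cast; ring) (by push_cast; ring) h3
    | one => exact DicosmAux.good_one
    | mul x y _ _ hx hy => exact DicosmAux.good_mul hx hy
    | inv x _ hx => exact DicosmAux.good_inv hx
  -- the basic translations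
  have ht2 : ∀ y : E3, (s2 * s1) y = y + vec (2*p2) 0 (2*(c:ℝ)) := by
    intro y
    rw [IsometryEquiv.mul_apply, h1, h2]
    apply DicosmAux.e3_eq <;> simp [halfTwistV] <;> ring
  have ht3 : ∀ y : E3, (s3 * s1) y = y + vec (2*p3) (2*q3) (2*(c:ℝ)) := by
    intro y
    rw [IsometryEquiv.mul_apply, h1, h3]
    apply DicosmAux.e3_eq <;> simp [halfTwistV] <;> ring
  have htz : ∀ y : E3, (s1 * s1) y = y + vec 0 0 (2*(c:ℝ)) := by
    intro y
    rw [IsometryEquiv.mul_apply, h1, h1]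
    apply DicosmAux.e3_eq <;> simp [halfTwistV] <;> ring
  have hz2 := DicosmAux.zpow_translation ht2
  have hz3 := DicosmAux.zpow_translation ht3
  have hzz := DicosmAux.zpow_translation htz
  have m1 : s1 ∈ G := Subgroup.subset_closure (by simp)
  have m2 : s2 ∈ G := Subgroup.subset_closure (by simp)
  have m3 : s3 ∈ G := Subgroup.subset_closure (by simp)
  set F := DicosmAux.Fset (c:ℝ) p2 q3 r with hFdef
  -- covering
  have cover : ∀ x : E3, ∃ g : G, g • x ∈ F := by
    intro x
    obtain ⟨hA0, hA1⟩ := DicosmAux.floor_trick hcR (x 2)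
    rcases Int.even_or_odd ⌊x 2 / (c:ℝ)⌋ with ⟨m, hm⟩ | ⟨m, hm⟩
    · -- even case: no rotation needed
      obtain ⟨hB0, hB1⟩ := DicosmAux.floor_trick hq3' (x 1)
      obtain ⟨hC0, hC1⟩ := DicosmAux.floor_trick hp2' (x 0 - r * x 1)
      rw [hm] at hA0 hA1
      refine ⟨⟨(s2*s1)^(-⌊(x 0 - r * x 1) / (2*p2)⌋) *
        ((s3*s1)^(-⌊x 1 / (2*q3)⌋) *
          ((s1*s1)^(-m - (-⌊(x 0 - r * x 1) / (2*p2)⌋) - (-⌊x 1 / (2*q3)⌋)))), ?_⟩, ?_⟩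
      · exact mul_mem (zpow_mem (mul_mem m2 m1) _)
          (mul_mem (zpow_mem (mul_mem m3 m1) _) (zpow_mem (mul_mem m1 m1) _))
      · show ((s2*s1)^(-⌊(x 0 - r * x 1) / (2*p2)⌋) *
          ((s3*s1)^(-⌊x 1 / (2*q3)⌋) *
            ((s1*s1)^(-m - (-⌊(x 0 - r * x 1) / (2*p2)⌋) - (-⌊x 1 / (2*q3)⌋))))) x ∈ F
        rw [IsometryEquiv.mul_apply, IsometryEquiv.mul_apply, hzz, hz3, hz2]
        simp only [hFdef, DicosmAux.Fset, Set.mem_setOf_eq, DicosmAux.add_apply',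
          DicosmAux.smul_apply', DicosmAux.vec_zero, DicosmAux.vec_one, DicosmAux.vec_two]
        refine ⟨⟨?_, ?_⟩, ⟨?_, ?_⟩, ?_, ?_⟩
        · push_cast at hA0 ⊢; linarith
        · push_cast at hA1 ⊢; linarith
        · push_cast at hB0 ⊢; linarith
        · push_cast at hB1 ⊢; linarith
        · rw [← hrq]; push_cast; linarith
        · rw [← hrq]; push_cast; linarith
    · -- odd case: apply the half turn s1 first
      obtain ⟨hB0, hB1⟩ := DicosmAux.floor_trick hq3' (-x 1)
      obtain ⟨hC0, hC1⟩ := DicosmAux.floor_trick hp2' (-x 0 - r * -x 1)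
      rw [hm] at hA0 hA1
      refine ⟨⟨(s2*s1)^(-⌊(-x 0 - r * -x 1) / (2*p2)⌋) *
        ((s3*s1)^(-⌊(-x 1) / (2*q3)⌋) *
          ((s1*s1)^(-m - 1 - (-⌊(-x 0 - r * -x 1) / (2*p2)⌋) - (-⌊(-x 1) / (2*q3)⌋)) * s1)), ?_⟩, ?_⟩
      · exact mul_mem (zpow_mem (mul_mem m2 m1) _)
          (mul_mem (zpow_mem (mul_mem m3 m1) _) (mul_mem (zpow_mem (mul_mem m1 m1) _) m1))
      · show ((s2*s1)^(-⌊(-x 0 - r * -x 1) / (2*p2)⌋) *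
          ((s3*s1)^(-⌊(-x 1) / (2*q3)⌋) *
            ((s1*s1)^(-m - 1 - (-⌊(-x 0 - r * -x 1) / (2*p2)⌋) - (-⌊(-x 1) / (2*q3)⌋)) * s1))) x ∈ F
        rw [IsometryEquiv.mul_apply, IsometryEquiv.mul_apply, IsometryEquiv.mul_apply, h1,
          hzz, hz3, hz2]
        simp only [hFdef, DicosmAux.Fset, Set.mem_setOf_eq, DicosmAux.add_apply',
          DicosmAux.smul_apply', DicosmAux.vec_zero, DicosmAux.vec_one, DicosmAux.vec_two,
          halfTwistV, mul_zero, zero_sub]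
        refine ⟨⟨?_, ?_⟩, ⟨?_, ?_⟩, ?_, ?_⟩
        · push_cast at hA0 ⊢; linarith
        · push_cast at hA1 ⊢; linarith
        · push_cast at hB0 ⊢; linarith
        · push_cast at hB1 ⊢; linarith
        · rw [← hrq]; push_cast; linarith
        · rw [← hrq]; push_cast; linarith
  -- disjointness
  have disj : ∀ g : G, g ≠ 1 → Disjoint ((g : ↥G) • F) F := by
    intro g hgne
    rw [Set.disjoint_left]
    rintro y hy hyF
    rw [Set.mem_smul_set] at hy
    obtain ⟨x, hxF, rfl⟩ := hy
    obtain ⟨e, a, b, k, H⟩ := all_good (g : E3 ≃ᵢ E3) g.2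
    have hyF' : (g : E3 ≃ᵢ E3) x ∈ F := hyF
    rw [H x] at hyF'
    obtain ⟨⟨xz0, xz1⟩, ⟨xy0, xy1⟩, xx0, xx1⟩ := hxF
    simp only [hFdef, DicosmAux.Fset, Set.mem_setOf_eq, DicosmAux.vec_zero, DicosmAux.vec_one,
      DicosmAux.vec_two] at hyF'
    obtain ⟨⟨yz0, yz1⟩, ⟨yy0, yy1⟩, yx0, yx1⟩ := hyF'
    cases e with
    | true =>
        simp only [if_true] at yz0 yz1
        have hlt : ((2*k+1 : ℤ) : ℝ) * (c:ℝ) < 1 * (c:ℝ) := by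
          push_cast; push_cast at yz1; linarith
        have hgt : ((-1 : ℤ) : ℝ) * (c:ℝ) < ((2*k+1 : ℤ):ℝ) * (c:ℝ) := by
          push_cast; push_cast at yz0; linarith
        have l1 : (2*k+1 : ℤ) < 1 := by exact_mod_cast (mul_lt_mul_iff_of_pos_right hcR).1 hlt
        have l2 : (-1 : ℤ) < 2*k+1 := by exact_mod_cast (mul_lt_mul_iff_of_pos_right hcR).1 hgt
        omega
    | false =>
        simp only [Bool.false_eq_true, if_false] at yz0 yz1 yy0 yy1 yx0 yx1
        have hb : b = 0 := by
          have hlt : ((b : ℤ) : ℝ) * (2*q3) < 1 * (2*q3) := by push_cast; linarith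
          have hgt : ((-1 : ℤ) : ℝ) * (2*q3) < ((b : ℤ) : ℝ) * (2*q3) := by push_cast; linarith
          have l1 : (b : ℤ) < 1 := by exact_mod_cast (mul_lt_mul_iff_of_pos_right hq3').1 hlt
          have l2 : (-1 : ℤ) < b := by exact_mod_cast (mul_lt_mul_iff_of_pos_right hq3').1 hgt
          omega
        have hk : k = 0 := by
          have hlt : ((2*k : ℤ) : ℝ) * (c:ℝ) < 1 * (c:ℝ) := by push_cast; linarith
          have hgt : ((-1 : ℤ) : ℝ) * (c:ℝ) < ((2*k : ℤ) : ℝ) * (c:ℝ) := by push_cast; linarith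
          have l1 : (2*k : ℤ) < 1 := by exact_mod_cast (mul_lt_mul_iff_of_pos_right hcR).1 hlt
          have l2 : (-1 : ℤ) < 2*k := by exact_mod_cast (mul_lt_mul_iff_of_pos_right hcR).1 hgt
          omega
        have ha : a = 0 := by
          subst hb
          push_cast at yx0 yx1
          have hlt : ((a : ℤ) : ℝ) * (2*p2) < 1 * (2*p2) := by push_cast; linarith
          have hgt : ((-1 : ℤ) : ℝ) * (2*p2) < ((a : ℤ) : ℝ) * (2*p2) := by push_cast; linarith
          have l1 : (a : ℤ) < 1 := by exact_mod_cast (mul_lt_mul_iff_of_pos_right hp2').1 hlt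
          have l2 : (-1 : ℤ) < a := by exact_mod_cast (mul_lt_mul_iff_of_pos_right hp2').1 hgt
          omega
        apply hgne
        have hgid : (g : E3 ≃ᵢ E3) = 1 := by
          apply IsometryEquiv.ext
          intro z
          rw [H z]
          have : (1 : E3 ≃ᵢ E3) z = z := rfl
          rw [this, ← DicosmAux.e3_ext z]
          apply DicosmAux.vec_congr <;> simp [ha, hb, hk]
        exact Subtype.ext (by rw [hgid]; rfl)
  -- the instances needed for comparing fundamental domains
  haveI : Countable ↥G := DicosmAux.countable_closure (Set.toFinite _).countable
  letI : MeasurableSpace ↥G := ⊤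
  haveI : MeasurableSMul ↥G E3 := by
    refine @MeasurableSMul.mk _ _ _ _ _ ⟨?_⟩ ?_
    · intro g
      exact (DicosmAux.isom_measurePreserving (g : E3 ≃ᵢ E3)).measurable
    · intro x
      exact measurable_from_top
  haveI : SMulInvariantMeasure ↥G E3 volume := by
    constructor
    intro g U hU
    exact (DicosmAux.isom_measurePreserving (g : E3 ≃ᵢ E3)).measure_preimage
      hU.nullMeasurableSet
  have hFdom : IsFundamentalDomain ↥G F volume :=
    IsFundamentalDomain.mk'' (DicosmAux.Fset_meas _ _ _ _).nullMeasurableSet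
      (Filter.Eventually.of_forall cover)
      (fun g hg => (disj g hg).aedisjoint)
      (fun g => (DicosmAux.isom_measurePreserving (g : E3 ≃ᵢ E3)).quasiMeasurePreserving)
  rw [hs.measure_eq hFdom]
  exact DicosmAux.Fset_volume r hcR hp2 hq3
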